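/- Let (X,T) be a minimal invertible system, d ∈ ℕ, p ∈ ℤ[x]^d essentially distinct, and U₁,…,U_d ⊆ X nonempty open. If R_p(U₁,…,U_d) is nonempty, then it is syndetic. (One may assume as a black box the IP polynomial Szemerédi theorem in the form: for any minimal system, any nonempty open V, and any tuple q of pairwise distinct polynomials vanishing at 0, the set R_q(V,…,V) is syndetic.) -/

import Mathlib

/-- A set `S ⊆ ℤ` is syndetic if finitely many translates of `S` cover `ℤ`. -/
def Syndetic (S : Set ℤ) : Prop := ∃ N : ℕ, ∀ m : ℤ, ∃ i : ℕ, i ≤ N ∧ m + i ∈ S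

/-- The return-time set `R_p(U₁,…,U_d)` along a polynomial tuple. -/
def returnTimes {α : Type*} (T : Equiv.Perm α) {d : ℕ} (p : Fin d → Polynomial ℤ)
    (U : Fin d → Set α) : Set ℤ :=
  {n : ℤ | ∃ x : α, ∀ i : Fin d, (T ^ (p i).eval n) x ∈ U i}

/-- A tuple of integer polynomials is essentially distinct if all pairwise
differences are non-constant. -/
def EssentiallyDistinct {d : ℕ} (p : Fin d → Polynomial ℤ) : Prop :=
  ∀ i j : Fin d, i ≠ j → (p i - p j).natDegree ≠ 0

/-- A system `(α, T)` is minimal if every (two-sided) orbit is dense. -/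
def IsMinimalSystem {α : Type*} [TopologicalSpace α] (T : Equiv.Perm α) : Prop :=
  ∀ x : α, Dense (Set.range fun n : ℤ => (T ^ n) x)

private lemma cont_zpow {α : Type*} [TopologicalSpace α] (T : Equiv.Perm α)
    (hT : Continuous T) (hT' : Continuous T.symm) (n : ℤ) :
    Continuous ⇑(T ^ n) := by
  induction n using Int.induction_on with
  | zero => simpa using continuous_id
  | succ k ih =>
    have : (T ^ ((k : ℤ) + 1)) = T ^ (k : ℤ) * T := by rw [zpow_add, zpow_one]
    rw [this]
    exact ih.comp hT
  | pred k ih =>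
    have : (T ^ (-(k : ℤ) - 1)) = T ^ (-(k : ℤ)) * T⁻¹ := by
      rw [← zpow_neg_one, ← zpow_add]; ring_nf
    rw [this]
    have hinv : Continuous ⇑(T⁻¹) := hT'
    exact ih.comp hinv

theorem stmt_9 {α : Type*} [MetricSpace α] [CompactSpace α]
    (T : Equiv.Perm α) (hT : Continuous T) (hT' : Continuous T.symm)
    (hmin : IsMinimalSystem T)
    -- black box: the IP polynomial Szemerédi theorem
    (ipSzemeredi : ∀ (d' : ℕ) (q : Fin d' → Polynomial ℤ) (V : Set α),
      IsOpen V → V.Nonempty → (∀ i, (q i).eval 0 = 0) →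
      (∀ i j : Fin d', i ≠ j → q i ≠ q j) →
      Syndetic (returnTimes T q fun _ => V))
    {d : ℕ} (p : Fin d → Polynomial ℤ) (hp : EssentiallyDistinct p)
    (U : Fin d → Set α) (hUne : ∀ i, (U i).Nonempty) (hUop : ∀ i, IsOpen (U i))
    (hne : (returnTimes T p U).Nonempty) :
    Syndetic (returnTimes T p U) := by
  obtain ⟨a, x₀, hx₀⟩ := hne
  set V : Set α := ⋂ i : Fin d, (⇑(T ^ (p i).eval a)) ⁻¹' (U i) with hV
  have hVopen : IsOpen V :=
    isOpen_iInter_of_finite fun i => (hUop i).preimage (cont_zpow T hT hT' _)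
  have hVne : V.Nonempty := ⟨x₀, Set.mem_iInter.2 fun i => hx₀ i⟩
  set q : Fin d → Polynomial ℤ :=
    fun i => (p i).comp (Polynomial.X + Polynomial.C a) - Polynomial.C ((p i).eval a) with hq
  have hqeval : ∀ i n, (q i).eval n = (p i).eval (n + a) - (p i).eval a := by
    intro i n; simp [hq, Polynomial.eval_comp]
  have hq0 : ∀ i, (q i).eval 0 = 0 := by intro i; simp [hqeval]
  have hqdist : ∀ i j : Fin d, i ≠ j → q i ≠ q j := by
    intro i j hij heq
    apply hp i j hij
    have h1 : (p i - p j).comp (Polynomial.X + Polynomial.C a)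
        = Polynomial.C ((p i).eval a - (p j).eval a) := by
      have := sub_eq_zero.mpr heq
      simp only [hq] at this
      have : (p i).comp (Polynomial.X + Polynomial.C a)
          - (p j).comp (Polynomial.X + Polynomial.C a)
          = Polynomial.C ((p i).eval a) - Polynomial.C ((p j).eval a) := by
        linear_combination this
      rw [Polynomial.sub_comp, this, Polynomial.C_sub]
    have h2 : ((p i - p j).comp (Polynomial.X + Polynomial.C a)).natDegree
        = (p i - p j).natDegree := by
      rw [Polynomial.natDegree_comp, Polynomial.natDegree_X_add_C, mul_one]
    rw [h1, Polynomial.natDegree_C] at h2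
    exact h2.symm
  obtain ⟨N, hN⟩ := ipSzemeredi d q V hVopen hVne hq0 hqdist
  refine ⟨N, fun m => ?_⟩
  obtain ⟨i, hiN, hi⟩ := hN (m - a)
  refine ⟨i, hiN, ?_⟩
  obtain ⟨y, hy⟩ := hi
  refine ⟨y, fun j => ?_⟩
  have hyj := Set.mem_iInter.1 (hy j) j
  have hpow : (T ^ (p j).eval (m + i)) y
      = (T ^ (p j).eval a) ((T ^ (q j).eval (m - a + i)) y) := by
    rw [← Equiv.Perm.mul_apply, ← zpow_add, hqeval]
    congr 2
    ring_nf
  rw [hpow]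
  exact hyj
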